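/- Let A be an associative unital algebra over ℝ, let c, m be real scalars with m ≠ 0, and let r₁, r₂, u₁, u₂ ∈ A satisfy the canonical commutation relations [uᵢ, rⱼ] = δᵢⱼ·1, [r₁,r₂] = 0, [u₁,u₂] = 0 (with [a,b] := ab − ba). Define the hat-representation operators P̂ₜ := c·u₁ + (m/2)·u₂² + (r₁u₁ + r₂u₂)u₁, K̂ := r₁, D̂ := c·1 + 2r₁u₁ + r₂u₂, P̂ₓ := m·u₂ + r₂u₁, Ĝ := r₂, and set ℛ₀ := r₁ − (1/(2m))·r₂². Then: (i) P̂ₜ − (1/(2m))·P̂ₓ² = (c − 1/2)·u₁ + ℛ₀·u₁², (ii) K̂ − (1/(2m))·Ĝ² = ℛ₀, (iii) D̂ − (1/m)·Ĝ·P̂ₓ − (1/2)·1 = (c − 1/2)·1 + 2·ℛ₀·u₁. -/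

import Mathlib

/-- In the hat-representation of the Schrödinger algebra, built from combinatorial
raising operators `r₁, r₂` and lowering operators `u₁, u₂` with `[uᵢ,rⱼ] = δᵢⱼ`,
the subtractions `P̂ₜ - P̂ₓ²/(2m)`, `K̂ - Ĝ²/(2m)`, `D̂ - Ĝ·P̂ₓ/m - 1/2` are expressed
through `ℛ₀ = r₁ - r₂²/(2m)`. -/
theorem schrodinger_hat_subtractions {A : Type*} [Ring A] [Algebra ℝ A]
    (c m : ℝ) (hm : m ≠ 0) (r₁ r₂ u₁ u₂ : A)
    (h11 : u₁ * r₁ - r₁ * u₁ = 1)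
    (h22 : u₂ * r₂ - r₂ * u₂ = 1)
    (h12 : u₁ * r₂ - r₂ * u₁ = 0)
    (h21 : u₂ * r₁ - r₁ * u₂ = 0)
    (hrr : r₁ * r₂ - r₂ * r₁ = 0)
    (huu : u₁ * u₂ - u₂ * u₁ = 0) :
    let Pt : A := c • u₁ + (m / 2) • u₂ ^ 2 + (r₁ * u₁ + r₂ * u₂) * u₁
    let K : A := r₁
    let D : A := c • (1 : A) + 2 * (r₁ * u₁) + r₂ * u₂
    let Px : A := m • u₂ + r₂ * u₁
    let G : A := r₂
    let R₀ : A := r₁ - (1 / (2 * m)) • r₂ ^ 2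
    (Pt - (1 / (2 * m)) • Px ^ 2 = (c - 1 / 2) • u₁ + R₀ * u₁ ^ 2) ∧
    (K - (1 / (2 * m)) • G ^ 2 = R₀) ∧
    (D - (1 / m) • (G * Px) - (1 / 2 : ℝ) • (1 : A)
      = (c - 1 / 2) • (1 : A) + 2 * (R₀ * u₁)) := by
  intro Pt K D Px G R₀
  have hu1r2 : u₁ * r₂ = r₂ * u₁ := sub_eq_zero.mp h12
  have hu2r2 : u₂ * r₂ = 1 + r₂ * u₂ := eq_add_of_sub_eq h22
  have huu' : u₂ * u₁ = u₁ * u₂ := (sub_eq_zero.mp huu).symm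
  have l1 : ∀ x : A, u₁ * (r₂ * x) = r₂ * (u₁ * x) := fun x => by
    rw [← mul_assoc, hu1r2, mul_assoc]
  have l2 : ∀ x : A, u₂ * (r₂ * x) = x + r₂ * (u₂ * x) := fun x => by
    rw [← mul_assoc, hu2r2, add_mul, one_mul, mul_assoc]
  have l3 : ∀ x : A, u₂ * (u₁ * x) = u₁ * (u₂ * x) := fun x => by
    rw [← mul_assoc, huu', mul_assoc]
  refine ⟨?_, rfl, ?_⟩
  · show c • u₁ + (m / 2) • u₂ ^ 2 + (r₁ * u₁ + r₂ * u₂) * u₁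
        - (1 / (2 * m)) • (m • u₂ + r₂ * u₁) ^ 2
      = (c - 1 / 2) • u₁ + (r₁ - (1 / (2 * m)) • r₂ ^ 2) * u₁ ^ 2
    simp only [pow_two, mul_add, add_mul, sub_mul, smul_add, smul_sub, mul_smul_comm,
      smul_mul_assoc, smul_smul, mul_assoc, l1, l2, l3, hu1r2, hu2r2, huu', sub_smul]
    match_scalars <;> (field_simp; try ring)
  · show c • (1 : A) + 2 * (r₁ * u₁) + r₂ * u₂ - (1 / m) • (r₂ * (m • u₂ + r₂ * u₁))
        - (1 / 2 : ℝ) • (1 : A)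
      = (c - 1 / 2) • (1 : A) + 2 * ((r₁ - (1 / (2 * m)) • r₂ ^ 2) * u₁)
    simp only [two_mul, mul_add, add_mul, sub_mul, smul_add, mul_smul_comm, smul_mul_assoc,
      smul_smul, pow_two, sub_smul, smul_sub, mul_assoc]
    match_scalars <;> (field_simp; try ring)
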